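/- A 2-dimensional subspace W ⊆ 𝔭 belongs to 𝒳 = {W : SO(3)·W = 𝔭} if and only if W contains an element of the SO(3)-orbit of X₀ = diag(1,1,−2). -/

import Mathlib

open Matrix

lemma perm_conj (σ : Equiv.Perm (Fin 3)) (v : Fin 3 → ℝ) :
    (σ.permMatrix ℝ) * Matrix.diagonal v * (σ.permMatrix ℝ)ᵀ = Matrix.diagonal (v ∘ σ) := by
  rw [PEquiv.toMatrix_toPEquiv_mul, ← PEquiv.toMatrix_symm, ← Equiv.toPEquiv_symm,
    PEquiv.mul_toMatrix_toPEquiv]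
  simp [Matrix.submatrix_submatrix]

lemma perm_orth (σ : Equiv.Perm (Fin 3)) :
    (σ.permMatrix ℝ) * (σ.permMatrix ℝ)ᵀ = 1 := by
  have := perm_conj σ (fun _ => 1)
  simpa [Matrix.diagonal_one, Function.comp_def] using this

lemma pair_match (b c y z : ℝ) (hs : b + c = y + z) (hp : b * c = y * z) :
    (b = y ∧ c = z) ∨ (b = z ∧ c = y) := by
  have key : (b - y) * (b - z) = 0 := by linear_combination b * hs - hp
  rcases mul_eq_zero.1 key with h | h
  · left; constructor <;> linarith
  · right; constructor <;> linarith

lemma diag_match (f g : Fin 3 → ℝ)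
    (h1 : f 0 + f 1 + f 2 = g 0 + g 1 + g 2)
    (h2 : f 0 * f 1 + f 1 * f 2 + f 2 * f 0 = g 0 * g 1 + g 1 * g 2 + g 2 * g 0)
    (h3 : f 0 * f 1 * f 2 = g 0 * g 1 * g 2) :
    ∃ σ : Equiv.Perm (Fin 3), f = g ∘ σ := by
  have key : (f 0 - g 0) * (f 0 - g 1) * (f 0 - g 2) = 0 := by
    linear_combination (f 0)^2 * h1 - f 0 * h2 + h3
  have fix : ∀ σ : Equiv.Perm (Fin 3), f 0 = g (σ 0) → f 1 = g (σ 1) → f 2 = g (σ 2) →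
      ∃ σ : Equiv.Perm (Fin 3), f = g ∘ σ := by
    intro σ e0 e1 e2
    exact ⟨σ, funext fun i => by fin_cases i <;> assumption⟩
  rcases mul_eq_zero.1 key with h | h
  · rcases mul_eq_zero.1 h with h0 | h0
    · have h0' : f 0 = g 0 := by linarith
      have hs : f 1 + f 2 = g 1 + g 2 := by linarith
      have hp : f 1 * f 2 = g 1 * g 2 := by
        linear_combination h2 - (f 1 + f 2) * h0' - g 0 * hs
      rcases pair_match _ _ _ _ hs hp with ⟨e1, e2⟩ | ⟨e1, e2⟩
      · exact fix (Equiv.refl _) h0' e1 e2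
      · exact fix (Equiv.swap 1 2) (by convert h0' using 2 <;> decide) (by convert e1 using 2 <;> decide) (by convert e2 using 2 <;> decide)
    · have h0' : f 0 = g 1 := by linarith
      have hs : f 1 + f 2 = g 0 + g 2 := by linarith
      have hp : f 1 * f 2 = g 0 * g 2 := by
        linear_combination h2 - (f 1 + f 2) * h0' - g 1 * hs
      rcases pair_match _ _ _ _ hs hp with ⟨e1, e2⟩ | ⟨e1, e2⟩
      · exact fix (Equiv.swap 0 1) (by convert h0' using 2 <;> decide) (by convert e1 using 2 <;> decide) (by convert e2 using 2 <;> decide)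
      · exact fix (finRotate 3) (by convert h0' using 2 <;> decide) (by convert e1 using 2 <;> decide) (by convert e2 using 2 <;> decide)
  · have h0' : f 0 = g 2 := by linarith
    have hs : f 1 + f 2 = g 0 + g 1 := by linarith
    have hp : f 1 * f 2 = g 0 * g 1 := by
      linear_combination h2 - (f 1 + f 2) * h0' - g 2 * hs
    rcases pair_match _ _ _ _ hs hp with ⟨e1, e2⟩ | ⟨e1, e2⟩
    · exact fix ((finRotate 3)⁻¹) (by convert h0' using 2 <;> decide) (by convert e1 using 2 <;> decide) (by convert e2 using 2 <;> decide)
    · exact fix (Equiv.swap 0 2) (by convert h0' using 2 <;> decide) (by convert e1 using 2 <;> decide) (by convert e2 using 2 <;> decide)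

/-- Invariants of a symmetric 3×3 real matrix via eigenvalues. -/
lemma eigen_data (A : Matrix (Fin 3) (Fin 3) ℝ) (hAs : Aᵀ = A) :
    ∃ (U : Matrix (Fin 3) (Fin 3) ℝ) (d : Fin 3 → ℝ),
      U * Uᵀ = 1 ∧ A = U * Matrix.diagonal d * Uᵀ ∧
      A.trace = d 0 + d 1 + d 2 ∧ (A * A).trace = d 0 ^ 2 + d 1 ^ 2 + d 2 ^ 2 ∧
      A.det = d 0 * d 1 * d 2 := by
  have hA : A.IsHermitian := by
    rw [Matrix.IsHermitian, conjTranspose_eq_transpose_of_trivial]; exact hAs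
  set U : Matrix (Fin 3) (Fin 3) ℝ := (hA.eigenvectorUnitary : Matrix (Fin 3) (Fin 3) ℝ) with hU
  set D := Matrix.diagonal hA.eigenvalues with hD
  have hspec : A = U * D * Uᵀ := by
    have := hA.spectral_theorem
    rw [← conjTranspose_eq_transpose_of_trivial]
    exact this
  have hUo : U * Uᵀ = 1 := by
    rw [← conjTranspose_eq_transpose_of_trivial]
    exact (Matrix.mem_unitaryGroup_iff).mp hA.eigenvectorUnitary.2
  have hUo' : Uᵀ * U = 1 := mul_eq_one_comm.mp hUo
  have hcan : ∀ X : Matrix (Fin 3) (Fin 3) ℝ, Uᵀ * (U * X) = X := by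
    intro X; rw [← Matrix.mul_assoc, hUo', Matrix.one_mul]
  refine ⟨U, hA.eigenvalues, hUo, hspec, ?_, ?_, ?_⟩
  · rw [congrArg Matrix.trace hspec, Matrix.trace_mul_cycle, hUo', Matrix.one_mul, hD,
      Matrix.trace_diagonal, Fin.sum_univ_three]
  · rw [show A * A = U * D * Uᵀ * (U * D * Uᵀ) by rw [← hspec]]
    have : U * D * Uᵀ * (U * D * Uᵀ) = U * (D * D) * Uᵀ := by
      simp only [Matrix.mul_assoc, hcan]
    rw [this, Matrix.trace_mul_cycle, hUo', Matrix.one_mul, hD,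
      Matrix.diagonal_mul_diagonal, Matrix.trace_diagonal, Fin.sum_univ_three]
    ring
  · rw [show A.det = ∏ i, hA.eigenvalues i by simpa using hA.det_eq_prod_eigenvalues,
      Fin.prod_univ_three]

/-- Two symmetric 3×3 real matrices with the same trace, trace of square, and determinant
are conjugate by a special orthogonal matrix. -/
lemma conj_of_invariants (A B : Matrix (Fin 3) (Fin 3) ℝ) (hAs : Aᵀ = A) (hBs : Bᵀ = B)
    (h1 : A.trace = B.trace) (h2 : (A * A).trace = (B * B).trace) (h3 : A.det = B.det) :
    ∃ k : Matrix (Fin 3) (Fin 3) ℝ, k * kᵀ = 1 ∧ k.det = 1 ∧ k * B * kᵀ = A := by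
  obtain ⟨U, d, hUo, hAspec, hAtr, hAtr2, hAdet⟩ := eigen_data A hAs
  obtain ⟨V, e, hVo, hBspec, hBtr, hBtr2, hBdet⟩ := eigen_data B hBs
  have hUo' : Uᵀ * U = 1 := mul_eq_one_comm.mp hUo
  have hVo' : Vᵀ * V = 1 := mul_eq_one_comm.mp hVo
  -- match eigenvalues
  obtain ⟨σ, hσ⟩ : ∃ σ : Equiv.Perm (Fin 3), d = e ∘ σ := by
    apply diag_match
    · rw [← hAtr, ← hBtr, h1]
    · have hA2 : d 0 * d 1 + d 1 * d 2 + d 2 * d 0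
          = e 0 * e 1 + e 1 * e 2 + e 2 * e 0 := by
        have q1 : d 0 + d 1 + d 2 = e 0 + e 1 + e 2 := by rw [← hAtr, ← hBtr, h1]
        have q2 : d 0 ^ 2 + d 1 ^ 2 + d 2 ^ 2 = e 0 ^ 2 + e 1 ^ 2 + e 2 ^ 2 := by
          rw [← hAtr2, ← hBtr2, h2]
        linear_combination ((d 0 + d 1 + d 2 + e 0 + e 1 + e 2) / 2) * q1 - (1/2) * q2
      exact hA2
    · rw [← hAdet, ← hBdet, h3]
  -- permutation matrix
  set P := σ.permMatrix ℝ with hP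
  have hPo : P * Pᵀ = 1 := perm_orth σ
  have hPD : P * Matrix.diagonal e * Pᵀ = Matrix.diagonal d := by
    rw [perm_conj, ← hσ]
  -- candidate k0 = U * P * Vᵀ
  have key : ∀ k : Matrix (Fin 3) (Fin 3) ℝ, k * kᵀ = 1 → k * Matrix.diagonal e * kᵀ = Matrix.diagonal d →
      (U * k * Vᵀ) * B * (U * k * Vᵀ)ᵀ = A ∧ (U * k * Vᵀ) * (U * k * Vᵀ)ᵀ = 1 := by
    intro k hko hkD
    have hVcan : ∀ X : Matrix (Fin 3) (Fin 3) ℝ, Vᵀ * (V * X) = X := by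
      intro X; rw [← Matrix.mul_assoc, hVo', Matrix.one_mul]
    constructor
    · rw [hBspec]
      have expand : U * k * Vᵀ * (V * Matrix.diagonal e * Vᵀ) * (U * k * Vᵀ)ᵀ
          = U * (k * Matrix.diagonal e * kᵀ) * Uᵀ := by
        simp only [Matrix.transpose_mul, Matrix.transpose_transpose, Matrix.mul_assoc, hVcan]
      rw [expand, hkD, ← hAspec]
    · have : U * k * Vᵀ * (U * k * Vᵀ)ᵀ = U * (k * kᵀ) * Uᵀ := by
        simp only [Matrix.transpose_mul, Matrix.transpose_transpose, Matrix.mul_assoc, hVcan]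
      rw [this, hko, Matrix.mul_one, hUo]
  obtain ⟨hc1, hc2⟩ := key P hPo hPD
  have hdet2 : (U * P * Vᵀ).det * (U * P * Vᵀ).det = 1 := by
    have := congrArg Matrix.det hc2
    rwa [Matrix.det_mul, Matrix.det_transpose, Matrix.det_one] at this
  rcases mul_self_eq_one_iff.mp hdet2 with hdet | hdet
  · exact ⟨U * P * Vᵀ, hc2, hdet, hc1⟩
  · -- fix the sign with S = diagonal ![1,1,-1]
    set S : Matrix (Fin 3) (Fin 3) ℝ := Matrix.diagonal ![1, 1, -1] with hS
    have hSo : S * Sᵀ = 1 := by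
      rw [hS, Matrix.diagonal_transpose, Matrix.diagonal_mul_diagonal]
      ext i j
      fin_cases i <;> fin_cases j <;> simp [Matrix.diagonal, Matrix.one_apply]
    have hSP : (S * P) * (S * P)ᵀ = 1 := by
      rw [Matrix.transpose_mul, Matrix.mul_assoc, ← Matrix.mul_assoc P, hPo, Matrix.one_mul, hSo]
    have hSPD : (S * P) * Matrix.diagonal e * (S * P)ᵀ = Matrix.diagonal d := by
      rw [Matrix.transpose_mul, show S * P * Matrix.diagonal e * (Pᵀ * Sᵀ)
          = S * (P * Matrix.diagonal e * Pᵀ) * Sᵀ by simp only [Matrix.mul_assoc], hPD]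
      ext i j
      fin_cases i <;> fin_cases j <;>
        simp [hS, Matrix.mul_apply, Matrix.diagonal, Fin.sum_univ_three]
    obtain ⟨hd1, hd2⟩ := key (S * P) hSP hSPD
    refine ⟨U * (S * P) * Vᵀ, hd2, ?_, hd1⟩
    have hdS : S.det = -1 := by
      rw [hS, Matrix.det_diagonal, Fin.prod_univ_three]
      norm_num
      rfl
    have : (U * (S * P) * Vᵀ).det = S.det * (U * P * Vᵀ).det := by
      simp only [Matrix.det_mul]; ring
    rw [this, hdS, hdet]; norm_num

lemma trace_sq_pos (v : Matrix (Fin 3) (Fin 3) ℝ) (hv : vᵀ = v) (h0 : v ≠ 0) :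
    0 < (v * v).trace := by
  have hsym : ∀ i j, v j i = v i j := fun i j => by
    simpa using congrFun (congrFun hv i) j
  have hkey : (v * v).trace = ∑ i, ∑ j, (v i j)^2 := by
    rw [Matrix.trace]
    simp only [Matrix.diag, Matrix.mul_apply]
    refine Finset.sum_congr rfl fun i _ => Finset.sum_congr rfl fun j _ => ?_
    rw [hsym i j, sq]
  rw [hkey]
  obtain ⟨i, j, hij⟩ : ∃ i j, v i j ≠ 0 := by
    by_contra hc
    push_neg at hc
    exact h0 (by ext i j; simpa using hc i j)
  exact Finset.sum_pos' (fun i _ => Finset.sum_nonneg fun j _ => sq_nonneg _)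
    ⟨i, Finset.mem_univ i, Finset.sum_pos' (fun j _ => sq_nonneg _)
      ⟨j, Finset.mem_univ j, by positivity⟩⟩

theorem stmt10 (W : Submodule ℝ (Matrix (Fin 3) (Fin 3) ℝ))
    (hW : ∀ X ∈ W, Xᵀ = X ∧ X.trace = 0)
    (hdim : Module.finrank ℝ W = 2) :
    (∀ A : Matrix (Fin 3) (Fin 3) ℝ, Aᵀ = A → A.trace = 0 →
      ∃ (k : Matrix (Fin 3) (Fin 3) ℝ) (w : Matrix (Fin 3) (Fin 3) ℝ),
        w ∈ W ∧ k * kᵀ = 1 ∧ k.det = 1 ∧ k * w * kᵀ = A) ↔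
    (∃ w ∈ W, ∃ k : Matrix (Fin 3) (Fin 3) ℝ, k * kᵀ = 1 ∧ k.det = 1 ∧
      w = k * !![(1 : ℝ), 0, 0; 0, 1, 0; 0, 0, -2] * kᵀ) := by
  set X₀ : Matrix (Fin 3) (Fin 3) ℝ := !![(1:ℝ),0,0;0,1,0;0,0,-2] with hX₀
  have hX₀diag : X₀ = Matrix.diagonal ![1, 1, -2] := by
    ext i j
    fin_cases i <;> fin_cases j <;> simp [hX₀, Matrix.diagonal_apply, Matrix.vecHead, Matrix.vecTail]
  have hX₀s : X₀ᵀ = X₀ := by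
    rw [hX₀diag, Matrix.diagonal_transpose]
  have hX₀tr : X₀.trace = 0 := by
    rw [hX₀diag, Matrix.trace_diagonal, Fin.sum_univ_three]
    norm_num [Matrix.cons_val_two]
  constructor
  · intro h
    obtain ⟨k, w, hwW, hk1, hk2, heq⟩ := h X₀ hX₀s hX₀tr
    have hk1' : kᵀ * k = 1 := mul_eq_one_comm.mp hk1
    refine ⟨w, hwW, kᵀ, by rwa [Matrix.transpose_transpose], by rwa [Matrix.det_transpose], ?_⟩
    rw [Matrix.transpose_transpose, ← heq]
    calc w = (kᵀ * k) * w * (kᵀ * k) := by rw [hk1', Matrix.one_mul, Matrix.mul_one]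
    _ = kᵀ * (k * w * kᵀ) * k := by simp only [Matrix.mul_assoc]
  · rintro ⟨w₀, hw₀W, k, hk1, hk2, hw₀⟩ A hAs hAtr0
    have hk1' : kᵀ * k = 1 := mul_eq_one_comm.mp hk1
    have hcank : ∀ X : Matrix (Fin 3) (Fin 3) ℝ, kᵀ * (k * X) = X := by
      intro X; rw [← Matrix.mul_assoc, hk1', Matrix.one_mul]
    -- invariants of w₀
    have hw₀tr2 : (w₀ * w₀).trace = 6 := by
      have hthis : w₀ * w₀ = k * (X₀ * X₀) * kᵀ := by
        rw [hw₀]; simp only [Matrix.mul_assoc, hcank]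
      rw [hthis, Matrix.trace_mul_cycle, ← Matrix.mul_assoc, hk1', Matrix.one_mul]
      rw [hX₀diag, Matrix.diagonal_mul_diagonal, Matrix.trace_diagonal, Fin.sum_univ_three]
      norm_num [Matrix.cons_val_two]
    have hw₀det : w₀.det = -2 := by
      rw [hw₀, Matrix.det_mul, Matrix.det_mul, Matrix.det_transpose, hk2]
      rw [hX₀diag, Matrix.det_diagonal, Fin.prod_univ_three]
      norm_num [Matrix.cons_val_two]
    -- find v in W orthogonal to w₀
    let φ : W →ₗ[ℝ] ℝ :=
      { toFun := fun x => (w₀ * (x : Matrix (Fin 3) (Fin 3) ℝ)).trace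
        map_add' := fun x y => by simp [Matrix.mul_add]
        map_smul' := fun c x => by simp [Matrix.mul_smul] }
    obtain ⟨v, hvker, hv0⟩ : ∃ v : W, v ∈ LinearMap.ker φ ∧ v ≠ 0 := by
      have h1 : Module.finrank ℝ (LinearMap.range φ) ≤ 1 := by
        simpa using (LinearMap.range φ).finrank_le
      have h2 := LinearMap.finrank_range_add_finrank_ker φ
      rw [hdim] at h2
      have h3 : 0 < Module.finrank ℝ (LinearMap.ker φ) := by omega
      by_contra hc
      push_neg at hc
      have : LinearMap.ker φ = ⊥ := by
        rw [Submodule.eq_bot_iff]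
        intro x hx
        exact hc x hx
      rw [this, finrank_bot] at h3
      omega
    set V : Matrix (Fin 3) (Fin 3) ℝ := (v : Matrix (Fin 3) (Fin 3) ℝ) with hV
    have hvW : V ∈ W := v.2
    have hV0 : V ≠ 0 := fun h => hv0 (Subtype.ext h)
    have hφv : (w₀ * V).trace = 0 := hvker
    have hVw₀ : (V * w₀).trace = 0 := by rw [Matrix.trace_mul_comm]; exact hφv
    have htv : 0 < (V * V).trace := trace_sq_pos V (hW V hvW).1 hV0
    set tv := (V * V).trace with htvdef
    -- eigen data of A
    obtain ⟨UA, d, _, _, hAtr, hAtr2, hAdet⟩ := eigen_data A hAs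
    set τ := (A * A).trace with hτdef
    have hτ0 : 0 ≤ τ := by rw [hAtr2]; positivity
    have hdsum : d 0 + d 1 + d 2 = 0 := by rw [← hAtr]; exact hAtr0
    have hBound : 54 * A.det ^ 2 ≤ τ ^ 3 := by
      rw [hAdet, hAtr2]
      have hc2 : d 2 = -d 0 - d 1 := by linarith
      rw [hc2]
      nlinarith [sq_nonneg ((d 0 - d 1) * (2 * d 0 + d 1) * (d 0 + 2 * d 1))]
    set s := Real.sqrt (τ / 6) with hsdef
    have hs0 : 0 ≤ s := Real.sqrt_nonneg _
    have hs2 : s ^ 2 = τ / 6 := Real.sq_sqrt (by linarith)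
    set r := Real.sqrt (τ / tv) with hrdef
    have hr2' : r ^ 2 * tv = τ := by
      rw [hrdef, Real.sq_sqrt (div_nonneg hτ0 htv.le)]
      exact div_mul_cancel₀ τ (ne_of_gt htv)
    have hsq : A.det ^ 2 ≤ (2 * s ^ 3) ^ 2 := by
      have : (2 * s ^ 3) ^ 2 = 4 * (s ^ 2) ^ 3 := by ring
      rw [this, hs2]
      nlinarith [hBound]
    have hs3 : 0 ≤ s ^ 3 := by positivity
    obtain ⟨hlow, hhigh⟩ := abs_le_of_sq_le_sq' hsq (by linarith)
    -- the path
    set wline : ℝ → Matrix (Fin 3) (Fin 3) ℝ :=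
      fun θ => (s * Real.cos θ) • w₀ + (r * Real.sin θ) • V with hwline
    have hcont : Continuous fun θ => (wline θ).det := by
      apply Continuous.matrix_det
      fun_prop
    have hept0 : (wline 0).det = -(2 * s ^ 3) := by
      have h1 : wline 0 = s • w₀ := by simp [hwline]
      rw [h1, Matrix.det_smul, hw₀det]
      norm_num [Fintype.card_fin]
      ring
    have heptpi : (wline Real.pi).det = 2 * s ^ 3 := by
      have h1 : wline Real.pi = (-s) • w₀ := by
        simp [hwline]
      rw [h1, Matrix.det_smul, hw₀det]
      norm_num [Fintype.card_fin]
      ring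
    obtain ⟨θ, hθmem, hθdet⟩ := intermediate_value_Icc (le_of_lt Real.pi_pos)
      hcont.continuousOn (by
        rw [show ((fun θ => (wline θ).det) 0) = -(2 * s ^ 3) from hept0,
          show ((fun θ => (wline θ).det) Real.pi) = 2 * s ^ 3 from heptpi]
        exact ⟨hlow, hhigh⟩ :
        A.det ∈ Set.Icc ((fun θ => (wline θ).det) 0) ((fun θ => (wline θ).det) Real.pi))
    set B := wline θ with hBdef
    have hBW : B ∈ W := W.add_mem (W.smul_mem _ hw₀W) (W.smul_mem _ hvW)
    have hBs : Bᵀ = B := (hW B hBW).1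
    have hBtr : B.trace = 0 := (hW B hBW).2
    have htrBB : (B * B).trace = τ := by
      have hexp : (B * B).trace
          = (s * Real.cos θ) * (s * Real.cos θ) * (w₀ * w₀).trace
            + (s * Real.cos θ) * (r * Real.sin θ) * (w₀ * V).trace
            + (r * Real.sin θ) * (s * Real.cos θ) * (V * w₀).trace
            + (r * Real.sin θ) * (r * Real.sin θ) * (V * V).trace := by
        rw [hBdef]
        simp only [hwline, Matrix.add_mul, Matrix.mul_add, smul_mul_assoc,
          mul_smul_comm, smul_smul, Matrix.trace_add, Matrix.trace_smul, smul_eq_mul]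
        ring
      rw [hexp, hw₀tr2, hφv, hVw₀, ← htvdef]
      have hpyth := Real.sin_sq_add_cos_sq θ
      have e1 : (s * Real.cos θ) * (s * Real.cos θ) * 6 = τ * (Real.cos θ) ^ 2 := by
        have : (s * Real.cos θ) * (s * Real.cos θ) * 6 = 6 * s ^ 2 * (Real.cos θ) ^ 2 := by ring
        rw [this, hs2]; ring
      have e2 : (r * Real.sin θ) * (r * Real.sin θ) * tv = τ * (Real.sin θ) ^ 2 := by
        have : (r * Real.sin θ) * (r * Real.sin θ) * tv = (r ^ 2 * tv) * (Real.sin θ) ^ 2 := by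
          ring
        rw [this, hr2']
      rw [mul_zero, mul_zero, add_zero, add_zero, e1, e2]
      linear_combination τ * hpyth
    have hdetB : A.det = B.det := hθdet.symm
    obtain ⟨k', hk'o, hk'det, hk'conj⟩ := conj_of_invariants A B hAs hBs
      (by rw [hAtr0, hBtr]) (by rw [htrBB]) hdetB
    exact ⟨k', B, hBW, hk'o, hk'det, hk'conj⟩
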